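/- Let H be a real Hilbert space and f: H → ℝ ∪ {+∞} proper, lsc, and convex. Then the following are equivalent: (i) f is almost strictly convex (strictly convex along every line segment contained in dom ∂f); (ii) ∂f is strictly monotone on every convex subset of dom ∂f; (iii) ∂f is strictly monotone on its whole graph. -/
import Mathlib


open scoped InnerProductSpace

variable {H : Type*} [NormedAddCommGroup H] [InnerProductSpace ℝ H] [CompleteSpace H]

/-- `f` is proper: not identically `⊤` and never `⊥`. -/
def IsProperFn (f : H → EReal) : Prop := (∃ x, f x ≠ ⊤) ∧ ∀ x, f x ≠ ⊥

/-- `f` is convex (as an extended-real-valued function). -/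
def IsConvexFn (f : H → EReal) : Prop :=
  ∀ x y : H, ∀ t : ℝ, 0 < t → t < 1 →
    f ((1 - t) • x + t • y) ≤ ((1 - t : ℝ) : EReal) * f x + ((t : ℝ) : EReal) * f y

/-- `f` is strictly convex on the set `s`. -/
def StrictConvexOnSet (f : H → EReal) (s : Set H) : Prop :=
  ∀ x ∈ s, ∀ y ∈ s, x ≠ y → ∀ t : ℝ, 0 < t → t < 1 →
    f ((1 - t) • x + t • y) < ((1 - t : ℝ) : EReal) * f x + ((t : ℝ) : EReal) * f y

/-- The effective domain of `f`. -/
def domFn (f : H → EReal) : Set H := {x | f x ≠ ⊤}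

/-- `f` is strictly convex (on its domain). -/
def IsStrictConvexFn (f : H → EReal) : Prop := StrictConvexOnSet f (domFn f)

/-- The convex subdifferential of `f` at `x`. -/
def subdiff (f : H → EReal) (x : H) : Set H :=
  {v | ∀ y : H, f x + ((⟪v, y - x⟫_ℝ : ℝ) : EReal) ≤ f y}

/-- The domain of the subdifferential. -/
def domSubdiff (f : H → EReal) : Set H := {x | (subdiff f x).Nonempty}

/-- `f` is almost strictly convex: strictly convex along every line segment in `dom ∂f`. -/
def AlmostStrictlyConvex (f : H → EReal) : Prop :=
  ∀ x₀ x₁ : H, x₀ ≠ x₁ → segment ℝ x₀ x₁ ⊆ domSubdiff f →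
    StrictConvexOnSet f (segment ℝ x₀ x₁)

/-- `∂f` is strictly monotone. -/
def StrictlyMonotoneSubdiff (f : H → EReal) : Prop :=
  ∀ x₀ x₁ v₀ v₁ : H, v₀ ∈ subdiff f x₀ → v₁ ∈ subdiff f x₁ → x₀ ≠ x₁ →
    0 < ⟪v₀ - v₁, x₀ - x₁⟫_ℝ

lemma fx_real {f : H → EReal} (hp : IsProperFn f) {x v : H} (hv : v ∈ subdiff f x) :
    ∃ a : ℝ, f x = (a : EReal) := by
  obtain ⟨x', hx'⟩ := hp.1
  have h := hv x'
  have hne : f x ≠ ⊤ := by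
    intro htop
    rw [htop, EReal.top_add_of_ne_bot (by exact EReal.coe_ne_bot _)] at h
    exact hx' (top_le_iff.mp h)
  exact ⟨(f x).toReal, (EReal.coe_toReal hne (hp.2 x)).symm⟩

lemma sub_ineq {f : H → EReal} {x v : H} (hv : v ∈ subdiff f x) {a b : ℝ} {y : H}
    (ha : f x = (a : EReal)) (hb : f y = (b : EReal)) :
    a + ⟪v, y - x⟫_ℝ ≤ b := by
  have h := hv y
  rw [ha, hb] at h
  exact_mod_cast h

lemma asc_to_sm (f : H → EReal) (hp : IsProperFn f) (hc : IsConvexFn f)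
    (h : AlmostStrictlyConvex f) : StrictlyMonotoneSubdiff f := by
  intro x₀ x₁ v₀ v₁ hv₀ hv₁ hne
  obtain ⟨a₀, ha₀⟩ := fx_real hp hv₀
  obtain ⟨a₁, ha₁⟩ := fx_real hp hv₁
  have h01 : a₀ + ⟪v₀, x₁ - x₀⟫_ℝ ≤ a₁ := sub_ineq hv₀ ha₀ ha₁
  have h10 : a₁ + ⟪v₁, x₀ - x₁⟫_ℝ ≤ a₀ := sub_ineq hv₁ ha₁ ha₀
  by_contra hcon
  push_neg at hcon
  have heq : a₀ + ⟪v₀, x₁ - x₀⟫_ℝ = a₁ := by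
    simp only [inner_sub_left, inner_sub_right] at hcon h01 h10 ⊢
    linarith
  -- every point of the segment has v₀ as a subgradient
  have hsub : ∀ z ∈ segment ℝ x₀ x₁,
      f z = ((a₀ + ⟪v₀, z - x₀⟫_ℝ : ℝ) : EReal) ∧ v₀ ∈ subdiff f z := by
    rintro z ⟨s, t, hs, ht, hst, rfl⟩
    have hzx : s • x₀ + t • x₁ - x₀ = t • (x₁ - x₀) := by
      have : s = 1 - t := by linarith
      rw [this]; module
    have hinner : ⟪v₀, s • x₀ + t • x₁ - x₀⟫_ℝ = t * ⟪v₀, x₁ - x₀⟫_ℝ := by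
      rw [hzx, real_inner_smul_right]
    have hle : f (s • x₀ + t • x₁) ≤ ((a₀ + ⟪v₀, s • x₀ + t • x₁ - x₀⟫_ℝ : ℝ) : EReal) := by
      rcases eq_or_lt_of_le ht with h0 | h0
      · have hs1 : s = 1 := by linarith
        rw [← h0, hs1]
        simp [ha₀]
      · rcases eq_or_lt_of_le (by linarith : t ≤ 1) with h1 | h1
        · have hs0 : s = 0 := by linarith
          rw [hs0, h1]
          simp only [zero_smul, one_smul, zero_add]
          rw [ha₁]
          exact_mod_cast le_of_eq heq.symm
        · have hs1 : s = 1 - t := by linarith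
          subst hs1
          have hcv := hc x₀ x₁ t h0 h1
          rw [ha₀, ha₁] at hcv
          refine le_trans hcv ?_
          rw [hinner]
          norm_cast
          nlinarith [heq]
    have hge : ((a₀ + ⟪v₀, s • x₀ + t • x₁ - x₀⟫_ℝ : ℝ) : EReal) ≤ f (s • x₀ + t • x₁) := by
      have := hv₀ (s • x₀ + t • x₁)
      rw [ha₀] at this
      exact_mod_cast this
    have hfz := le_antisymm hle hge
    refine ⟨hfz, ?_⟩
    intro u
    rw [hfz]
    have harith : ((a₀ + ⟪v₀, s • x₀ + t • x₁ - x₀⟫_ℝ : ℝ) : EReal)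
        + ((⟪v₀, u - (s • x₀ + t • x₁)⟫_ℝ : ℝ) : EReal)
        = (a₀ : EReal) + ((⟪v₀, u - x₀⟫_ℝ : ℝ) : EReal) := by
      norm_cast
      simp only [inner_sub_right]
      ring
    rw [harith, ← ha₀]
    exact hv₀ u
  have hsegdom : segment ℝ x₀ x₁ ⊆ domSubdiff f := fun z hz => ⟨v₀, (hsub z hz).2⟩
  have hsc := h x₀ x₁ hne hsegdom x₀ (left_mem_segment ℝ x₀ x₁) x₁ (right_mem_segment ℝ x₀ x₁)
      hne (1/2) (by norm_num) (by norm_num)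
  have hmem : (1 - (1/2 : ℝ)) • x₀ + (1/2 : ℝ) • x₁ ∈ segment ℝ x₀ x₁ :=
    ⟨1 - 1/2, 1/2, by norm_num, by norm_num, by norm_num, rfl⟩
  rw [(hsub _ hmem).1, ha₀, ha₁] at hsc
  have hin2 : ⟪v₀, (1 - (1/2 : ℝ)) • x₀ + (1/2 : ℝ) • x₁ - x₀⟫_ℝ
      = (1/2) * ⟪v₀, x₁ - x₀⟫_ℝ := by
    rw [show (1 - (1/2 : ℝ)) • x₀ + (1/2 : ℝ) • x₁ - x₀ = (1/2 : ℝ) • (x₁ - x₀) by module,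
      real_inner_smul_right]
  rw [hin2] at hsc
  have hsc' : a₀ + 1/2 * ⟪v₀, x₁ - x₀⟫_ℝ < (1 - 1/2) * a₀ + 1/2 * a₁ := by
    exact_mod_cast hsc
  linarith [heq]

lemma p2_to_asc (f : H → EReal) (hp : IsProperFn f) (hc : IsConvexFn f)
    (h2 : ∀ s : Set H, s ⊆ domSubdiff f → Convex ℝ s →
        ∀ x₀ ∈ s, ∀ x₁ ∈ s, ∀ v₀ ∈ subdiff f x₀, ∀ v₁ ∈ subdiff f x₁,
          x₀ ≠ x₁ → 0 < ⟪v₀ - v₁, x₀ - x₁⟫_ℝ) : AlmostStrictlyConvex f := by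
  intro x₀ x₁ hne hseg x hx y hy hxy t ht0 ht1
  obtain ⟨vx, hvx⟩ := hseg hx
  obtain ⟨vy, hvy⟩ := hseg hy
  obtain ⟨a, ha⟩ := fx_real hp hvx
  obtain ⟨b, hb⟩ := fx_real hp hvy
  have hzseg : (1 - t) • x + t • y ∈ segment ℝ x₀ x₁ :=
    (convex_segment x₀ x₁) hx hy (by linarith) (le_of_lt ht0) (by ring)
  obtain ⟨vz, hvz⟩ := hseg hzseg
  obtain ⟨c, hcz⟩ := fx_real hp hvz
  have hconv : c ≤ (1 - t) * a + t * b := by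
    have := hc x y t ht0 ht1
    rw [ha, hb, hcz] at this
    exact_mod_cast this
  rw [ha, hb, hcz]
  rw [show ((1 - t : ℝ) : EReal) * (a : EReal) + ((t : ℝ) : EReal) * (b : EReal)
      = (((1 - t) * a + t * b : ℝ) : EReal) by norm_cast, EReal.coe_lt_coe_iff]
  rcases lt_or_eq_of_le hconv with hlt | heqc
  · exact hlt
  exfalso
  have h1 : c + ⟪vz, x - ((1 - t) • x + t • y)⟫_ℝ ≤ a := sub_ineq hvz hcz ha
  have h2' : c + ⟪vz, y - ((1 - t) • x + t • y)⟫_ℝ ≤ b := sub_ineq hvz hcz hb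
  have hzero : (1 - t) • (x - ((1 - t) • x + t • y)) + t • (y - ((1 - t) • x + t • y)) = 0 := by
    module
  have hsum : (1 - t) * ⟪vz, x - ((1 - t) • x + t • y)⟫_ℝ
      + t * ⟪vz, y - ((1 - t) • x + t • y)⟫_ℝ = 0 := by
    have := congrArg (fun w => ⟪vz, w⟫_ℝ) hzero
    simpa [inner_add_right, real_inner_smul_right] using this
  have hA : c + ⟪vz, x - ((1 - t) • x + t • y)⟫_ℝ = a := by
    nlinarith [mul_le_mul_of_nonneg_left h1 (by linarith : (0:ℝ) ≤ 1 - t),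
      mul_le_mul_of_nonneg_left h2' (le_of_lt ht0)]
  have hB : c + ⟪vz, y - ((1 - t) • x + t • y)⟫_ℝ = b := by
    nlinarith [mul_le_mul_of_nonneg_left h1 (by linarith : (0:ℝ) ≤ 1 - t),
      mul_le_mul_of_nonneg_left h2' (le_of_lt ht0)]
  have hvzx : vz ∈ subdiff f x := by
    intro u
    rw [ha]
    have harith : (a : EReal) + ((⟪vz, u - x⟫_ℝ : ℝ) : EReal)
        = (c : EReal) + ((⟪vz, u - ((1 - t) • x + t • y)⟫_ℝ : ℝ) : EReal) := by
      norm_cast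
      simp only [inner_sub_right] at hA ⊢
      linarith
    rw [harith, ← hcz]
    exact hvz u
  have hvzy : vz ∈ subdiff f y := by
    intro u
    rw [hb]
    have harith : (b : EReal) + ((⟪vz, u - y⟫_ℝ : ℝ) : EReal)
        = (c : EReal) + ((⟪vz, u - ((1 - t) • x + t • y)⟫_ℝ : ℝ) : EReal) := by
      norm_cast
      simp only [inner_sub_right] at hB ⊢
      linarith
    rw [harith, ← hcz]
    exact hvz u
  have := h2 (segment ℝ x₀ x₁) hseg (convex_segment x₀ x₁) x hx y hy vz hvzx vz hvzy hxy
  simp at this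

theorem stmt12 (f : H → EReal) (hp : IsProperFn f) (hlsc : LowerSemicontinuous f)
    (hc : IsConvexFn f) :
    (AlmostStrictlyConvex f ↔
      (∀ s : Set H, s ⊆ domSubdiff f → Convex ℝ s →
        ∀ x₀ ∈ s, ∀ x₁ ∈ s, ∀ v₀ ∈ subdiff f x₀, ∀ v₁ ∈ subdiff f x₁,
          x₀ ≠ x₁ → 0 < ⟪v₀ - v₁, x₀ - x₁⟫_ℝ)) ∧
    (AlmostStrictlyConvex f ↔ StrictlyMonotoneSubdiff f) := by
  refine ⟨⟨fun h1 s _ _ x₀ _ x₁ _ v₀ hv₀ v₁ hv₁ hne => asc_to_sm f hp hc h1 _ _ _ _ hv₀ hv₁ hne,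
    fun h2 => p2_to_asc f hp hc h2⟩,
    fun h1 => asc_to_sm f hp hc h1,
    fun h3 => p2_to_asc f hp hc
      (fun s _ _ x₀ _ x₁ _ v₀ hv₀ v₁ hv₁ hne => h3 _ _ _ _ hv₀ hv₁ hne)⟩
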